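/- For the simple random walk on ℤ started at 0 and any integer n ≥ 1, the first hitting time τ_n of n is almost surely finite, and for every z ∈ (0,1) one has E[z^{τ_n}] = ((1 − √(1 − z²))/z)^n; in particular E[z^{τ_1}] = (1 − √(1 − z²))/z. -/

import Mathlib

open MeasureTheory ProbabilityTheory ENNReal

namespace Stmt3Aux

variable {Ω : Type} [MeasurableSpace Ω]

/-- partial sums of the walk -/
def Sw (X : ℕ → Ω → ℤ) (t : ℕ) (ω : Ω) : ℤ := ∑ i ∈ Finset.range t, X i ω

open Classical in
/-- stopped exponential process -/
noncomputable def Gg (X : ℕ → Ω → ℤ) (n : ℕ) (τ : Ω → ℕ) (lam z : ℝ) (t : ℕ) (ω : Ω) : ℝ :=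
  if ∃ s ≤ t, Sw X s ω = (n : ℤ) then lam ^ n * z ^ τ ω
  else if ∀ i < t, X i ω = 1 ∨ X i ω = -1 then lam ^ (Sw X t ω) * z ^ t else 0

variable {X : ℕ → Ω → ℤ}

lemma measurable_Sw (hmeas : ∀ i, Measurable (X i)) (t : ℕ) : Measurable (Sw X t) :=
  Finset.measurable_sum _ fun i _ => hmeas i

lemma measurableSet_hit (hmeas : ∀ i, Measurable (X i)) (n : ℕ) (t : ℕ) :
    MeasurableSet {ω | ∃ s ≤ t, Sw X s ω = (n : ℤ)} := by
  have : {ω | ∃ s ≤ t, Sw X s ω = (n : ℤ)} = ⋃ s ∈ Finset.range (t+1), {ω | Sw X s ω = (n : ℤ)} := by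
    ext ω; simp [Nat.lt_succ_iff]
  rw [this]
  exact Finset.measurableSet_biUnion _ fun s _ => (measurable_Sw hmeas s) (measurableSet_singleton _)

lemma measurableSet_hitEver (hmeas : ∀ i, Measurable (X i)) (n : ℕ) :
    MeasurableSet {ω | ∃ s, Sw X s ω = (n : ℤ)} := by
  have : {ω | ∃ s, Sw X s ω = (n : ℤ)} = ⋃ s, {ω | Sw X s ω = (n : ℤ)} := by ext ω; simp
  rw [this]
  exact MeasurableSet.iUnion fun s => (measurable_Sw hmeas s) (measurableSet_singleton _)

lemma measurableSet_good (hmeas : ∀ i, Measurable (X i)) (t : ℕ) :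
    MeasurableSet {ω | ∀ i < t, X i ω = 1 ∨ X i ω = -1} := by
  have : {ω | ∀ i < t, X i ω = 1 ∨ X i ω = -1}
      = ⋂ i ∈ Finset.range t, ({ω | X i ω = 1} ∪ {ω | X i ω = -1}) := by
    ext ω; simp [Finset.mem_range]
  rw [this]
  exact Finset.measurableSet_biInter _ fun i _ =>
    ((hmeas i (measurableSet_singleton _)).union (hmeas i (measurableSet_singleton _)))

lemma measurable_tau (hmeas : ∀ i, Measurable (X i)) (n : ℕ) (hn : 1 ≤ n) {τ : Ω → ℕ}
    (hτ : ∀ ω, τ ω = sInf {t : ℕ | Sw X t ω = (n : ℤ)}) : Measurable τ := by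
  apply measurable_to_countable'
  intro k
  match k with
  | 0 =>
    have h0 : ∀ ω, Sw X 0 ω = 0 := fun ω => by simp [Sw]
    have : τ ⁻¹' {0} = ⋂ t, {ω | Sw X t ω ≠ (n : ℤ)} := by
      ext ω
      simp only [Set.mem_preimage, Set.mem_singleton_iff, Set.mem_iInter, Set.mem_setOf_eq, hτ]
      constructor
      · intro h t ht
        rcases Nat.sInf_eq_zero.mp h with h' | h'
        · rw [Set.mem_setOf_eq, h0 ω] at h'
          omega
        · exact (Set.eq_empty_iff_forall_notMem.mp h' t) ht
      · intro h
        apply Nat.sInf_eq_zero.mpr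
        right
        exact Set.eq_empty_iff_forall_notMem.mpr h
    rw [this]
    exact MeasurableSet.iInter fun t =>
      ((measurable_Sw hmeas t) (measurableSet_singleton _)).compl
  | (k+1) =>
    have : τ ⁻¹' {k+1}
        = {ω | Sw X (k+1) ω = (n : ℤ)} ∩ ⋂ j ∈ Finset.range (k+1), {ω | Sw X j ω ≠ (n : ℤ)} := by
      ext ω
      simp only [Set.mem_preimage, Set.mem_singleton_iff, hτ, Set.mem_inter_iff, Set.mem_setOf_eq,
        Set.mem_iInter, Finset.mem_range]
      constructor
      · intro h
        have hne : {t : ℕ | Sw X t ω = (n : ℤ)}.Nonempty := by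
          by_contra hc
          rw [Set.not_nonempty_iff_eq_empty] at hc
          rw [hc] at h
          simp at h
        have hmem := Nat.sInf_mem hne
        rw [h] at hmem
        refine ⟨hmem, fun j hj => ?_⟩
        have := Nat.notMem_of_lt_sInf (by omega : j < sInf {t : ℕ | Sw X t ω = (n : ℤ)})
        exact this
      · rintro ⟨h1, h2⟩
        have hle : sInf {t : ℕ | Sw X t ω = (n : ℤ)} ≤ k + 1 := Nat.sInf_le h1
        have hmem := Nat.sInf_mem (⟨k+1, h1⟩ : {t : ℕ | Sw X t ω = (n : ℤ)}.Nonempty)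
        by_contra hc
        have hlt : sInf {t : ℕ | Sw X t ω = (n : ℤ)} < k + 1 := lt_of_le_of_ne hle hc
        exact h2 _ hlt hmem
    rw [this]
    exact ((measurable_Sw hmeas (k+1)) (measurableSet_singleton _)).inter
      (Finset.measurableSet_biInter _ fun j _ =>
        ((measurable_Sw hmeas j) (measurableSet_singleton _)).compl)

omit [MeasurableSpace Ω] in
/-- discrete intermediate value: if steps are ±1 and n is never hit up to time t, the walk
stays below n. -/
lemma ivt {n : ℕ} (hn : 1 ≤ n) {ω : Ω} :
    ∀ t, (∀ i < t, X i ω = 1 ∨ X i ω = -1) → (∀ s ≤ t, Sw X s ω ≠ (n : ℤ)) →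
      Sw X t ω < (n : ℤ) := by
  intro t
  induction t with
  | zero => intro _ _; simp [Sw]; omega
  | succ t ih =>
    intro hgood hne
    have h1 : Sw X t ω < n := ih (fun i hi => hgood i (by omega)) (fun s hs => hne s (by omega))
    have hstep : Sw X (t+1) ω = Sw X t ω + X t ω := by
      simp [Sw, Finset.sum_range_succ]
    have hx := hgood t (by omega)
    have hne' := hne (t+1) le_rfl
    rcases hx with hx | hx <;> rw [hstep, hx] <;> omega


lemma measurable_Gg (hmeas : ∀ i, Measurable (X i)) (n : ℕ) {τ : Ω → ℕ} (hτmeas : Measurable τ)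
    (lam z : ℝ) (t : ℕ) : Measurable (Gg X n τ lam z t) := by
  unfold Gg
  apply Measurable.ite (measurableSet_hit hmeas n t)
  · exact measurable_const.mul ((measurable_of_countable (fun k : ℕ => z ^ k)).comp hτmeas)
  · apply Measurable.ite (measurableSet_good hmeas t)
    · exact ((measurable_of_countable (fun k : ℤ => lam ^ k)).comp
        (measurable_Sw hmeas t)).mul measurable_const
    · exact measurable_const

omit [MeasurableSpace Ω] in
lemma abs_Gg_le {n : ℕ} (hn : 1 ≤ n) {τ : Ω → ℕ} {lam z : ℝ} (hz0 : 0 < z) (hz1 : z < 1)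
    (hlam : 1 < lam) (t : ℕ) (ω : Ω) : |Gg X n τ lam z t ω| ≤ lam ^ n := by
  have hlam0 : (0:ℝ) < lam := lt_trans one_pos hlam
  have hzpow : z ^ τ ω ≤ 1 := pow_le_one₀ hz0.le hz1.le
  have hzt : z ^ t ≤ 1 := pow_le_one₀ hz0.le hz1.le
  unfold Gg
  split_ifs with h1 h2
  · rw [abs_of_nonneg (by positivity)]
    calc lam ^ n * z ^ τ ω ≤ lam ^ n * 1 := by
          apply mul_le_mul_of_nonneg_left hzpow (by positivity)
      _ = lam ^ n := mul_one _
  · push_neg at h1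
    have hlt : Sw X t ω < (n : ℤ) := ivt hn t h2 h1
    have h3 : lam ^ (Sw X t ω) ≤ lam ^ (n : ℤ) := zpow_le_zpow_right₀ hlam.le hlt.le
    rw [abs_of_nonneg (by positivity)]
    calc lam ^ (Sw X t ω) * z ^ t ≤ lam ^ (Sw X t ω) * 1 := by
          apply mul_le_mul_of_nonneg_left hzt (by positivity)
      _ = lam ^ (Sw X t ω) := mul_one _
      _ ≤ lam ^ (n : ℤ) := h3
      _ = lam ^ n := by rw [zpow_natCast]
  · simpa using by positivity

lemma integrable_Gg {P : Measure Ω} [IsProbabilityMeasure P]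
    (hmeas : ∀ i, Measurable (X i)) {n : ℕ} (hn : 1 ≤ n) {τ : Ω → ℕ} (hτmeas : Measurable τ)
    {lam z : ℝ} (hz0 : 0 < z) (hz1 : z < 1) (hlam : 1 < lam) (t : ℕ) :
    Integrable (Gg X n τ lam z t) P :=
  (integrable_const (lam ^ n)).mono'
    (measurable_Gg hmeas n hτmeas lam z t).aestronglyMeasurable
    (Filter.Eventually.of_forall fun ω => by
      simpa using abs_Gg_le hn hz0 hz1 hlam t ω)

open Classical in
lemma integral_step {P : Measure Ω} [IsProbabilityMeasure P] {i : ℕ}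
    (hmeasi : Measurable (X i))
    (hstep : P {ω | X i ω = 1} = 1 / 2 ∧ P {ω | X i ω = -1} = 1 / 2) (a b : ℝ) :
    ∫ ω, (if X i ω = 1 then a else if X i ω = -1 then b else 0) ∂P = (a + b) / 2 := by
  have hA : MeasurableSet {ω | X i ω = 1} := hmeasi (measurableSet_singleton _)
  have hB : MeasurableSet {ω | X i ω = -1} := hmeasi (measurableSet_singleton _)
  have hfun : (fun ω => (if X i ω = 1 then a else if X i ω = -1 then b else 0))
      = fun ω => Set.indicator {ω | X i ω = 1} (fun _ => a) ω
        + Set.indicator {ω | X i ω = -1} (fun _ => b) ω := by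
    funext ω
    by_cases h1 : X i ω = 1
    · simp [h1, Set.indicator_apply]
    · by_cases h2 : X i ω = -1 <;> simp [h1, h2, Set.indicator_apply]
  rw [hfun, integral_add ((integrable_const a).indicator hA) ((integrable_const b).indicator hB),
    integral_indicator_const _ hA, integral_indicator_const _ hB, measureReal_def, measureReal_def, hstep.1, hstep.2]
  rw [ENNReal.toReal_div]
  simp
  ring


lemma ae_good {P : Measure Ω} [IsProbabilityMeasure P]
    (hmeas : ∀ i, Measurable (X i))
    (hstep : ∀ i, P {ω | X i ω = 1} = 1 / 2 ∧ P {ω | X i ω = -1} = 1 / 2) :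
    ∀ᵐ ω ∂P, ∀ i, X i ω = 1 ∨ X i ω = -1 := by
  rw [MeasureTheory.ae_all_iff]
  intro i
  have hA : MeasurableSet {ω | X i ω = 1} := hmeas i (measurableSet_singleton _)
  have hB : MeasurableSet {ω | X i ω = -1} := hmeas i (measurableSet_singleton _)
  have hdisj : Disjoint {ω | X i ω = 1} {ω | X i ω = -1} := by
    rw [Set.disjoint_left]
    intro ω h1 h2
    simp only [Set.mem_setOf_eq] at h1 h2
    rw [h1] at h2; exact absurd h2 (by norm_num)
  have hunion : P ({ω | X i ω = 1} ∪ {ω | X i ω = -1}) = 1 := by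
    rw [measure_union hdisj hB, (hstep i).1, (hstep i).2]
    rw [ENNReal.div_add_div_same]
    rw [show (1 + 1 : ℝ≥0∞) = 2 by norm_num]
    exact ENNReal.div_self (by norm_num) (by norm_num)
  have hcompl : P ({ω | X i ω = 1} ∪ {ω | X i ω = -1})ᶜ = 0 := by
    rw [measure_compl (hA.union hB) (measure_ne_top _ _), hunion, measure_univ, tsub_self]
  rw [ae_iff]
  have heq : {ω | ¬(X i ω = 1 ∨ X i ω = -1)} = ({ω | X i ω = 1} ∪ {ω | X i ω = -1})ᶜ := by
    ext ω; simp [not_or]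
  rw [heq]
  exact hcompl

open Classical in
lemma integral_Gg_succ {P : Measure Ω} [IsProbabilityMeasure P]
    (hmeas : ∀ i, Measurable (X i))
    (hindep : iIndepFun X P)
    (hstep : ∀ i, P {ω | X i ω = 1} = 1 / 2 ∧ P {ω | X i ω = -1} = 1 / 2)
    {n : ℕ} (hn : 1 ≤ n) {τ : Ω → ℕ}
    (hτ : ∀ ω, τ ω = sInf {t : ℕ | Sw X t ω = (n : ℤ)})
    {lam z : ℝ} (hz0 : 0 < z) (hz1 : z < 1) (hlam : 1 < lam)
    (hmean : z * lam + z * lam⁻¹ = 2) (t : ℕ) :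
    ∫ ω, Gg X n τ lam z (t+1) ω ∂P = ∫ ω, Gg X n τ lam z t ω ∂P := by
  have hτmeas : Measurable τ := measurable_tau hmeas n hn hτ
  have hlam0 : (0:ℝ) < lam := lt_trans one_pos hlam
  have hlamne : lam ≠ 0 := ne_of_gt hlam0
  have hH : MeasurableSet {ω | ∃ s ≤ t, Sw X s ω = (n : ℤ)} := measurableSet_hit hmeas n t
  set H : Set Ω := {ω | ∃ s ≤ t, Sw X s ω = (n : ℤ)} with hHdef
  -- the "fresh step" factor
  set V : Ω → ℝ := fun ω => if X t ω = 1 then z * lam else if X t ω = -1 then z * lam⁻¹ else 0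
    with hVdef
  -- the "unstopped" part, as an explicit function of the first t steps
  set U : Ω → ℝ := fun ω =>
    if (¬ ∃ s ≤ t, Sw X s ω = (n : ℤ)) ∧ (∀ i < t, X i ω = 1 ∨ X i ω = -1)
    then lam ^ (Sw X t ω) * z ^ t else 0 with hUdef
  have hUind : U = Set.indicator Hᶜ (Gg X n τ lam z t) := by
    funext ω
    show (if (¬ ∃ s ≤ t, Sw X s ω = (n : ℤ)) ∧ (∀ i < t, X i ω = 1 ∨ X i ω = -1)
      then lam ^ (Sw X t ω) * z ^ t else 0) = _
    by_cases h1 : ∃ s ≤ t, Sw X s ω = (n : ℤ)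
    · have hmem : ω ∈ H := h1
      rw [Set.indicator_of_notMem (by simpa using hmem : ω ∉ Hᶜ)]
      rw [if_neg (by tauto)]
    · have hωc : ω ∈ Hᶜ := by simpa [hHdef] using h1
      rw [Set.indicator_of_mem hωc]
      unfold Gg
      rw [if_neg h1]
      by_cases h2 : ∀ i < t, X i ω = 1 ∨ X i ω = -1
      · rw [if_pos (show (¬ ∃ s ≤ t, Sw X s ω = (n : ℤ)) ∧ (∀ i < t, X i ω = 1 ∨ X i ω = -1) from ⟨h1, h2⟩), if_pos h2]
      · rw [if_neg (show ¬((¬ ∃ s ≤ t, Sw X s ω = (n : ℤ)) ∧ (∀ i < t, X i ω = 1 ∨ X i ω = -1)) from fun hc => h2 hc.2), if_neg h2]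
  have hGgInt : Integrable (Gg X n τ lam z t) P := integrable_Gg hmeas hn hτmeas hz0 hz1 hlam t
  have hUm : Measurable U := by
    rw [hUind]
    exact (measurable_Gg hmeas n hτmeas lam z t).indicator hH.compl
  have hUbd : ∀ ω, |U ω| ≤ lam ^ n := by
    intro ω
    rw [hUind]
    by_cases h : ω ∈ Hᶜ
    · rw [Set.indicator_of_mem h]; exact abs_Gg_le hn hz0 hz1 hlam t ω
    · rw [Set.indicator_of_notMem h]; simpa using by positivity
  have hVm : Measurable V := by
    have : V = (fun k : ℤ => if k = 1 then z * lam else if k = -1 then z * lam⁻¹ else 0) ∘ X t := by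
      funext ω; rfl
    rw [this]
    exact (measurable_of_countable _).comp (hmeas t)
  have hVbd : ∀ ω, |V ω| ≤ z * lam := by
    intro ω
    have h1 : (0:ℝ) ≤ z * lam := by positivity
    have h2 : lam⁻¹ ≤ lam := le_trans (inv_le_one_of_one_le₀ hlam.le) hlam.le
    show |(if X t ω = 1 then z * lam else if X t ω = -1 then z * lam⁻¹ else 0)| ≤ z * lam
    split_ifs with hx1 hx2
    · rw [abs_of_nonneg h1]
    · rw [abs_of_nonneg (by positivity)]
      exact mul_le_mul_of_nonneg_left h2 hz0.le
    · simpa using h1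
  -- pointwise recursion a.e.
  have hrec : ∀ᵐ ω ∂P, Gg X n τ lam z (t+1) ω
      = Set.indicator H (Gg X n τ lam z t) ω + U ω * V ω := by
    filter_upwards [ae_good hmeas hstep] with ω hg
    by_cases hH1 : ω ∈ H
    · have hH1' : ∃ s ≤ t, Sw X s ω = (n:ℤ) := hH1
      obtain ⟨s, hs, hsn⟩ := hH1'
      have h1 : ∃ s ≤ t + 1, Sw X s ω = (n:ℤ) := ⟨s, by omega, hsn⟩
      have hU0 : U ω = 0 := by
        rw [hUdef]; exact if_neg (fun hc => hc.1 ⟨s, hs, hsn⟩)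
      rw [Set.indicator_of_mem hH1, hU0, zero_mul, add_zero]
      unfold Gg
      rw [if_pos h1, if_pos (show ∃ s ≤ t, Sw X s ω = (n:ℤ) from hH1)]
    · have hne : ∀ s ≤ t, Sw X s ω ≠ (n:ℤ) := by
        intro s hs hsn; exact hH1 ⟨s, hs, hsn⟩
      have hnex : ¬ ∃ s ≤ t, Sw X s ω = (n:ℤ) := by
        push_neg; exact hne
      have hxt := hg t
      have hSsucc : Sw X (t+1) ω = Sw X t ω + X t ω := by
        simp [Sw, Finset.sum_range_succ]
      have hV : V ω = z * lam ^ (X t ω) := by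
        rcases hxt with hx | hx <;> simp [hVdef, hx, zpow_one]
      have hUval : U ω = lam ^ (Sw X t ω) * z ^ t := by
        rw [hUdef]; exact if_pos ⟨hnex, fun i _ => hg i⟩
      have hUV : U ω * V ω = lam ^ (Sw X (t+1) ω) * z ^ (t+1) := by
        rw [hUval, hV, hSsucc, zpow_add₀ hlamne, pow_succ]
        ring
      rw [Set.indicator_of_notMem hH1, zero_add, hUV]
      unfold Gg
      by_cases hH2 : ∃ s ≤ t + 1, Sw X s ω = (n:ℤ)
      · obtain ⟨s, hs, hsn⟩ := hH2
        have hst : s = t + 1 := by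
          by_contra hc
          exact hne s (by omega) hsn
        subst hst
        have hτω : τ ω = t + 1 := by
          rw [hτ]
          have hmem' : t + 1 ∈ {t' : ℕ | Sw X t' ω = (n:ℤ)} := hsn
          have hle := Nat.sInf_le hmem'
          have hmem := Nat.sInf_mem (⟨t+1, hmem'⟩ : {t' : ℕ | Sw X t' ω = (n:ℤ)}.Nonempty)
          by_contra hcon
          exact hne _ (by omega) hmem
        rw [if_pos ⟨t+1, le_rfl, hsn⟩, hτω, hsn]
        rw [zpow_natCast]
      · rw [if_neg hH2, if_pos (fun i _ => hg i)]
  -- integrability of the pieces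
  have hIndInt : Integrable (Set.indicator H (Gg X n τ lam z t)) P := hGgInt.indicator hH
  have hUVInt : Integrable (fun ω => U ω * V ω) P := by
    apply (integrable_const (lam ^ n * (z * lam))).mono'
      ((hUm.mul hVm).aestronglyMeasurable)
    apply Filter.Eventually.of_forall
    intro ω
    rw [Real.norm_eq_abs, Pi.mul_apply, abs_mul]
    exact mul_le_mul (hUbd ω) (hVbd ω) (abs_nonneg _) (by positivity)
  rw [integral_congr_ae hrec, integral_add hIndInt hUVInt]
  -- independence: U depends on X 0, ..., X (t-1); V on X t
  have hIndep : IndepFun U V P := by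
    have hAB := hindep.indepFun_finset (Finset.range t) {t}
      (by simp) hmeas
    set F : (↥(Finset.range t) → ℤ) → ℝ := fun v =>
      if (¬ ∃ s ≤ t, (∑ i ∈ Finset.range s,
            (if h : i ∈ Finset.range t then v ⟨i, h⟩ else 0)) = (n : ℤ))
          ∧ (∀ i < t, (if h : i ∈ Finset.range t then v ⟨i, h⟩ else 0) = 1
              ∨ (if h : i ∈ Finset.range t then v ⟨i, h⟩ else 0) = -1)
      then lam ^ (∑ i ∈ Finset.range t,
            (if h : i ∈ Finset.range t then v ⟨i, h⟩ else 0)) * z ^ t else 0 with hFdef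
    set Ψ : (↥({t} : Finset ℕ) → ℤ) → ℝ := fun v =>
      if v ⟨t, Finset.mem_singleton_self t⟩ = 1 then z * lam
      else if v ⟨t, Finset.mem_singleton_self t⟩ = -1 then z * lam⁻¹ else 0 with hΨdef
    have hFU : F ∘ (fun ω (i : ↥(Finset.range t)) => X (i : ℕ) ω) = U := by
      funext ω
      have hw : ∀ i < t, (if h : i ∈ Finset.range t then X (i:ℕ) ω else 0) = X i ω := by
        intro i hi
        rw [dif_pos (Finset.mem_range.mpr hi)]
      have hsum : ∀ s ≤ t, (∑ i ∈ Finset.range s,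
          (if h : i ∈ Finset.range t then X (i:ℕ) ω else 0)) = Sw X s ω := by
        intro s hs
        apply Finset.sum_congr rfl
        intro i hi
        have hi' : i < t := lt_of_lt_of_le (Finset.mem_range.mp hi) hs
        exact hw i hi'
      simp only [Function.comp_apply, hFdef, hUdef]
      have hiff1 : (¬ ∃ s ≤ t, (∑ i ∈ Finset.range s,
            (if h : i ∈ Finset.range t then X (i:ℕ) ω else 0)) = (n : ℤ))
          ↔ (¬ ∃ s ≤ t, Sw X s ω = (n : ℤ)) := by
        constructor <;> intro h hc <;> apply h
        · obtain ⟨s, hs, hsn⟩ := hc; exact ⟨s, hs, by rw [hsum s hs]; exact hsn⟩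
        · obtain ⟨s, hs, hsn⟩ := hc; exact ⟨s, hs, by rw [← hsum s hs]; exact hsn⟩
      have hiff2 : (∀ i < t, (if h : i ∈ Finset.range t then X (i:ℕ) ω else 0) = 1
              ∨ (if h : i ∈ Finset.range t then X (i:ℕ) ω else 0) = -1)
          ↔ (∀ i < t, X i ω = 1 ∨ X i ω = -1) := by
        constructor <;> intro h i hi
        · have hh := h i hi; rwa [hw i hi] at hh
        · have hh := h i hi; rwa [hw i hi]
      by_cases hc : (¬ ∃ s ≤ t, Sw X s ω = (n : ℤ)) ∧ (∀ i < t, X i ω = 1 ∨ X i ω = -1)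
      · rw [if_pos ⟨hiff1.mpr hc.1, hiff2.mpr hc.2⟩, if_pos hc, hsum t le_rfl]
      · rw [if_neg (fun hcc => hc ⟨hiff1.mp hcc.1, hiff2.mp hcc.2⟩), if_neg hc]
    have hΨV : Ψ ∘ (fun ω (i : ↥({t} : Finset ℕ)) => X (i : ℕ) ω) = V := by
      funext ω; rfl
    have hcomp := hAB.comp (φ := F) (ψ := Ψ) (measurable_of_countable F)
      (measurable_of_countable Ψ)
    rwa [hFU, hΨV] at hcomp
  have hmul : ∫ ω, U ω * V ω ∂P = (∫ ω, U ω ∂P) * ∫ ω, V ω ∂P := by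
    have := hIndep.integral_mul_eq_mul_integral hUm.aestronglyMeasurable hVm.aestronglyMeasurable
    simpa [Pi.mul_apply] using this
  have hVint : ∫ ω, V ω ∂P = 1 := by
    rw [hVdef]
    rw [integral_step (hmeas t) (hstep t)]
    linarith
  rw [hmul, hVint, mul_one, hUind, integral_indicator hH, integral_indicator hH.compl,
    integral_add_compl hH hGgInt]


lemma key {P : Measure Ω} [IsProbabilityMeasure P]
    (hmeas : ∀ i, Measurable (X i))
    (hindep : iIndepFun X P)
    (hstep : ∀ i, P {ω | X i ω = 1} = 1 / 2 ∧ P {ω | X i ω = -1} = 1 / 2)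
    {n : ℕ} (hn : 1 ≤ n) {τ : Ω → ℕ}
    (hτ : ∀ ω, τ ω = sInf {t : ℕ | Sw X t ω = (n : ℤ)})
    {z : ℝ} (hz0 : 0 < z) (hz1 : z < 1) :
    ∫ ω, Set.indicator {ω' | ∃ s, Sw X s ω' = (n : ℤ)} (fun ω' => z ^ τ ω') ω ∂P
      = ((1 - Real.sqrt (1 - z ^ 2)) / z) ^ n := by
  have hτmeas : Measurable τ := measurable_tau hmeas n hn hτ
  have hzsq : (0:ℝ) ≤ 1 - z ^ 2 := by nlinarith
  set r : ℝ := Real.sqrt (1 - z ^ 2) with hrdef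
  have hr2 : r ^ 2 = 1 - z ^ 2 := Real.sq_sqrt hzsq
  have hr0 : 0 ≤ r := Real.sqrt_nonneg _
  have hr1 : r < 1 := by nlinarith
  set lam : ℝ := (1 + r) / z with hlamdef
  have hlam : 1 < lam := by
    rw [hlamdef, lt_div_iff₀ hz0]; linarith
  have hlam0 : (0:ℝ) < lam := lt_trans one_pos hlam
  have hlaminv : lam⁻¹ = (1 - r) / z := by
    apply inv_eq_of_mul_eq_one_right
    rw [hlamdef]
    field_simp
    nlinarith
  have hmean : z * lam + z * lam⁻¹ = 2 := by
    rw [hlaminv, hlamdef]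
    field_simp
    ring
  have hzero : Gg X n τ lam z 0 = fun _ => 1 := by
    funext ω
    unfold Gg
    have h0 : Sw X 0 ω = 0 := by simp [Sw]
    rw [if_neg (by
      rintro ⟨s, hs, hsn⟩
      interval_cases s
      rw [h0] at hsn
      omega)]
    rw [if_pos (by omega), h0]
    norm_num
  have hconst : ∀ t, ∫ ω, Gg X n τ lam z t ω ∂P = 1 := by
    intro t
    induction t with
    | zero => rw [hzero]; simp
    | succ t ih =>
      rw [integral_Gg_succ hmeas hindep hstep hn hτ hz0 hz1 hlam hmean t, ih]
  set A : Set Ω := {ω' | ∃ s, Sw X s ω' = (n : ℤ)} with hAdef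
  have hAmeas : MeasurableSet A := measurableSet_hitEver hmeas n
  set Hfun : Ω → ℝ := Set.indicator A (fun ω' => lam ^ n * z ^ τ ω') with hHfdef
  have htend : Filter.Tendsto (fun t => ∫ ω, Gg X n τ lam z t ω ∂P)
      Filter.atTop (nhds (∫ ω, Hfun ω ∂P)) := by
    apply tendsto_integral_of_dominated_convergence (fun _ => lam ^ n)
    · exact fun t => (measurable_Gg hmeas n hτmeas lam z t).aestronglyMeasurable
    · exact integrable_const _
    · intro t
      apply Filter.Eventually.of_forall
      intro ω
      rw [Real.norm_eq_abs]
      exact abs_Gg_le hn hz0 hz1 hlam t ω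
    · filter_upwards [ae_good hmeas hstep] with ω hg
      by_cases hhit : ∃ s, Sw X s ω = (n : ℤ)
      · obtain ⟨s₀, hs₀⟩ := hhit
        have hHf : Hfun ω = lam ^ n * z ^ τ ω :=
          Set.indicator_of_mem (show ω ∈ A from ⟨s₀, hs₀⟩) (fun ω' => lam ^ n * z ^ τ ω')
        rw [hHf]
        apply tendsto_atTop_of_eventually_const (i₀ := s₀)
        intro t ht
        unfold Gg
        rw [if_pos ⟨s₀, ht, hs₀⟩]
      · have hHf : Hfun ω = 0 := Set.indicator_of_notMem (by simpa [hAdef] using hhit) _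
        rw [hHf]
        apply squeeze_zero_norm (a := fun t => lam ^ n * z ^ t)
        · intro t
          have hne : ∀ s ≤ t, Sw X s ω ≠ (n:ℤ) := fun s _ hsn => hhit ⟨s, hsn⟩
          have hnex : ¬ ∃ s ≤ t, Sw X s ω = (n:ℤ) := by push_neg; exact hne
          have hGt : Gg X n τ lam z t ω = lam ^ (Sw X t ω) * z ^ t := by
            unfold Gg
            rw [if_neg hnex, if_pos (fun i _ => hg i)]
          rw [hGt, Real.norm_eq_abs, abs_of_nonneg (by positivity)]
          have hlt : Sw X t ω < (n : ℤ) := ivt hn t (fun i _ => hg i) hne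
          have h3 : lam ^ (Sw X t ω) ≤ lam ^ (n : ℤ) := zpow_le_zpow_right₀ hlam.le hlt.le
          rw [zpow_natCast] at h3
          exact mul_le_mul_of_nonneg_right h3 (by positivity)
        · have := (tendsto_pow_atTop_nhds_zero_of_lt_one hz0.le hz1).const_mul (lam ^ n)
          simpa using this
  have hHint : ∫ ω, Hfun ω ∂P = 1 := by
    have h2 : Filter.Tendsto (fun t => ∫ ω, Gg X n τ lam z t ω ∂P)
        Filter.atTop (nhds 1) := by
      simp only [hconst]
      exact tendsto_const_nhds
    exact tendsto_nhds_unique htend h2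
  have hHsplit : Hfun = fun ω => lam ^ n * Set.indicator A (fun ω' => z ^ τ ω') ω := by
    funext ω
    rw [hHfdef]
    by_cases h : ω ∈ A
    · rw [Set.indicator_of_mem h, Set.indicator_of_mem h]
    · rw [Set.indicator_of_notMem h, Set.indicator_of_notMem h, mul_zero]
  rw [hHsplit] at hHint
  rw [integral_const_mul] at hHint
  have hfinal : ∫ ω, Set.indicator A (fun ω' => z ^ τ ω') ω ∂P = (lam ^ n)⁻¹ := by
    field_simp at hHint ⊢
    linarith
  rw [hfinal, ← inv_pow, hlaminv]

end Stmt3Aux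

open Stmt3Aux in
/-- For the simple random walk on `ℤ` started at `0` and any integer `n ≥ 1`, the first hitting
time `τ_n` of `n` is almost surely finite, and for every `z ∈ (0,1)` one has
`E[z^{τ_n}] = ((1 − √(1 − z²))/z)^n`; in particular `E[z^{τ_1}] = (1 − √(1 − z²))/z`. -/
theorem stmt3
    (Ω : Type) (_ : MeasurableSpace Ω) (P : Measure Ω) (hP : IsProbabilityMeasure P)
    (X : ℕ → Ω → ℤ)
    (hmeas : ∀ i, Measurable (X i))
    (hindep : iIndepFun X P)
    (hstep : ∀ i, P {ω | X i ω = 1} = 1 / 2 ∧ P {ω | X i ω = -1} = 1 / 2)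
    (n : ℕ) (hn : 1 ≤ n)
    (τ : Ω → ℕ)
    (hτ : ∀ ω, τ ω = sInf {t : ℕ | (∑ i ∈ Finset.range t, X i ω) = (n : ℤ)}) :
    (∀ᵐ ω ∂P, ∃ t : ℕ, (∑ i ∈ Finset.range t, X i ω) = (n : ℤ)) ∧
    (∀ z : ℝ, 0 < z → z < 1 →
      (∫ ω, z ^ τ ω ∂P) = ((1 - Real.sqrt (1 - z ^ 2)) / z) ^ n) ∧
    (∀ z : ℝ, 0 < z → z < 1 → n = 1 →
      (∫ ω, z ^ τ ω ∂P) = (1 - Real.sqrt (1 - z ^ 2)) / z) := by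
  classical
  have hτ' : ∀ ω, τ ω = sInf {t : ℕ | Sw X t ω = (n : ℤ)} := hτ
  have hτmeas : Measurable τ := measurable_tau hmeas n hn hτ'
  set A : Set Ω := {ω' | ∃ s, Sw X s ω' = (n : ℤ)} with hAdef
  have hAmeas : MeasurableSet A := measurableSet_hitEver hmeas n
  have hkey : ∀ z : ℝ, 0 < z → z < 1 →
      ∫ ω, Set.indicator A (fun ω' => z ^ τ ω') ω ∂P
        = ((1 - Real.sqrt (1 - z ^ 2)) / z) ^ n :=
    fun z hz0 hz1 => key hmeas hindep hstep hn hτ' hz0 hz1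
  -- a.s. finiteness
  have hle1 : ∀ z : ℝ, 0 < z → z < 1 →
      ((1 - Real.sqrt (1 - z ^ 2)) / z) ^ n ≤ (P A).toReal := by
    intro z hz0 hz1
    rw [← hkey z hz0 hz1]
    have hIndInt : Integrable (Set.indicator A (fun ω' => z ^ τ ω')) P := by
      apply (integrable_const (1:ℝ)).mono'
        (((measurable_of_countable (fun k : ℕ => z ^ k)).comp hτmeas).indicator
          hAmeas).aestronglyMeasurable
      apply Filter.Eventually.of_forall
      intro ω
      rw [Real.norm_eq_abs]
      by_cases h : ω ∈ A
      · rw [Set.indicator_of_mem h]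
        simp only [Function.comp_apply]
        rw [abs_of_nonneg (pow_nonneg hz0.le _)]
        exact pow_le_one₀ hz0.le hz1.le
      · rw [Set.indicator_of_notMem h]; norm_num
    calc ∫ ω, Set.indicator A (fun ω' => z ^ τ ω') ω ∂P
        ≤ ∫ ω, Set.indicator A (fun _ => (1:ℝ)) ω ∂P := by
          apply integral_mono hIndInt ((integrable_const (1:ℝ)).indicator hAmeas)
          intro ω
          exact Set.indicator_le_indicator (pow_le_one₀ hz0.le hz1.le)
      _ = (P A).toReal := by
          rw [integral_indicator_const (1:ℝ) hAmeas, smul_eq_mul, mul_one, measureReal_def]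
  have htends : Filter.Tendsto (fun z : ℝ => ((1 - Real.sqrt (1 - z ^ 2)) / z) ^ n)
      (nhdsWithin 1 (Set.Iio 1)) (nhds 1) := by
    have hcont : ContinuousAt (fun z : ℝ => ((1 - Real.sqrt (1 - z ^ 2)) / z) ^ n) 1 := by
      apply ContinuousAt.pow
      apply ContinuousAt.div
      · exact continuousAt_const.sub (Real.continuous_sqrt.continuousAt.comp
          (continuousAt_const.sub ((continuous_pow 2).continuousAt)))
      · exact continuousAt_id
      · exact one_ne_zero
    have h1 := hcont.tendsto.mono_left (nhdsWithin_le_nhds (s := Set.Iio (1:ℝ)))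
    have hval : ((1 - Real.sqrt (1 - (1:ℝ) ^ 2)) / 1) ^ n = 1 := by
      norm_num
    rwa [hval] at h1
  have h1le : (1:ℝ) ≤ (P A).toReal := by
    apply le_of_tendsto htends
    filter_upwards [Ioo_mem_nhdsLT_of_mem (show (1:ℝ) ∈ Set.Ioc 0 1 by norm_num)] with z hz
    exact hle1 z hz.1 hz.2
  have hPA : P A = 1 := by
    refine le_antisymm prob_le_one ?_
    have hne : P A ≠ ⊤ := measure_ne_top _ _
    rw [← ENNReal.ofReal_toReal hne, ← ENNReal.ofReal_one]
    exact ENNReal.ofReal_le_ofReal h1le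
  have hAc : P Aᶜ = 0 := by
    rw [measure_compl hAmeas (measure_ne_top _ _), hPA, measure_univ, tsub_self]
  have haeA : ∀ᵐ ω ∂P, ω ∈ A := by
    rw [ae_iff]
    convert hAc using 2
    rfl
  have hpart1 : ∀ᵐ ω ∂P, ∃ t : ℕ, (∑ i ∈ Finset.range t, X i ω) = (n : ℤ) := haeA
  have hpart2 : ∀ z : ℝ, 0 < z → z < 1 →
      (∫ ω, z ^ τ ω ∂P) = ((1 - Real.sqrt (1 - z ^ 2)) / z) ^ n := by
    intro z hz0 hz1
    rw [← hkey z hz0 hz1]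
    apply integral_congr_ae
    filter_upwards [haeA] with ω hω
    rw [Set.indicator_of_mem hω]
  refine ⟨hpart1, hpart2, ?_⟩
  intro z hz0 hz1 hn1
  subst hn1
  simpa using hpart2 z hz0 hz1
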